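/- Let F be an algebraically closed field. The set of matrices A ∈ Mat(n × n², F) such that the only D ∈ Mat(n × n, F) satisfying DA = A(D ⊗ I_n + I_n ⊗ D) is D = 0, is a nonempty Zariski-open (hence Zariski-dense) subset of Mat(n × n², F). -/

import Mathlib

open Matrix Kronecker

-- hard linear algebra lemma
lemma aux_det_rows {ρ κ F : Type*} [Fintype ρ] [Fintype κ] [DecidableEq κ] [Field F]
    (M : Matrix ρ κ F) (h : ∀ v : κ → F, M *ᵥ v = 0 → v = 0) :
    ∃ r : κ → ρ, (M.submatrix r id).det ≠ 0 := by
  classical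
  have hinj : Function.Injective M.mulVec := by
    rw [← Matrix.coe_mulVecLin, ← LinearMap.ker_eq_bot, LinearMap.ker_eq_bot']
    intro v hv; exact h v hv
  have hli : LinearIndependent F (fun b => Mᵀ b) := Matrix.mulVec_injective_iff.mp hinj
  have hrank : Mᵀ.rank = Fintype.card κ := hli.rank_matrix
  have hrank2 : M.rank = Fintype.card κ := by rw [← Matrix.rank_transpose]; exact hrank
  have hspan : Submodule.span F (Set.range M) = ⊤ := by
    apply Submodule.eq_top_of_finrank_eq
    have := M.rank_eq_finrank_span_row
    rw [hrank2] at this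
    rw [Module.finrank_pi]; exact this.symm
  obtain ⟨b, hbsub, hbspan, hbli⟩ := exists_linearIndependent F (Set.range M)
  rw [hspan] at hbspan
  have hfin : b.Finite := hbli.setFinite
  have : Fintype b := hfin.fintype
  have hbasis : Module.Basis b F (κ → F) := Module.Basis.mk hbli (by rw [Subtype.range_coe, hbspan])
  have hcard : Fintype.card κ = Fintype.card b := by
    have h1 := Module.finrank_eq_card_basis hbasis
    rw [Module.finrank_pi] at h1; exact h1
  let e : κ ≃ b := Fintype.equivOfCardEq hcard
  have hex : ∀ c : κ, ∃ i : ρ, M i = (e c : κ → F) := fun c => (hbsub (e c).2)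
  choose r hr using hex
  refine ⟨r, ?_⟩
  have hrows : LinearIndependent F (fun c : κ => (M.submatrix r id) c) := by
    have : (fun c : κ => (M.submatrix r id) c) = fun c => ((e c : b) : κ → F) := by
      funext c; exact hr c
    rw [this]
    exact hbli.comp (fun c => e c) e.injective
  have := Matrix.linearIndependent_rows_iff_isUnit.mp hrows
  rw [Matrix.isUnit_iff_isUnit_det, isUnit_iff_ne_zero] at this
  exact this

lemma aux_det_rows' {ρ κ F : Type*} [Fintype ρ] [Fintype κ] [DecidableEq κ] [Field F]
    (M : Matrix ρ κ F) (r : κ → ρ) (hd : (M.submatrix r id).det ≠ 0) :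
    ∀ v : κ → F, M *ᵥ v = 0 → v = 0 := by
  intro v hv
  have hU : IsUnit (M.submatrix r id) := by
    rw [Matrix.isUnit_iff_isUnit_det, isUnit_iff_ne_zero]; exact hd
  have hinj := Matrix.mulVec_injective_iff_isUnit.mpr hU
  have : (M.submatrix r id) *ᵥ v = 0 := by
    funext c
    have : ((M.submatrix r id) *ᵥ v) c = (M *ᵥ v) (r c) := by
      simp [Matrix.mulVec, Matrix.submatrix, dotProduct]
    rw [this, hv]; rfl
  have := hinj (a₂ := 0) (by rw [this, Matrix.mulVec_zero])
  exact this

-- the key computation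
lemma aux_comp {F : Type*} [Field F] {n : ℕ} (A : Matrix (Fin n) (Fin n × Fin n) F)
    (D : Matrix (Fin n) (Fin n) F) (r : Fin n × (Fin n × Fin n)) :
    ((fun (rr : Fin n × (Fin n × Fin n)) (c : Fin n × Fin n) =>
      (if rr.1 = c.1 then A c.2 rr.2 else 0) - (if c.2 = rr.2.1 then A rr.1 (c.1, rr.2.2) else 0)
        - (if c.2 = rr.2.2 then A rr.1 (rr.2.1, c.1) else 0) : Matrix _ _ F)
      *ᵥ (fun c => D c.1 c.2)) r
    = (D * A) r.1 r.2 - (A * (D ⊗ₖ (1 : Matrix (Fin n) (Fin n) F)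
        + (1 : Matrix (Fin n) (Fin n) F) ⊗ₖ D)) r.1 r.2 := by
  obtain ⟨i, j, k⟩ := r
  simp only [Matrix.mulVec, dotProduct, Fintype.sum_prod_type, Matrix.mul_apply,
    Matrix.add_apply, Matrix.kroneckerMap_apply, Matrix.one_apply, sub_mul, ite_mul, zero_mul,
    Finset.sum_sub_distrib, mul_add, mul_ite, mul_zero, mul_one]
  simp only [Finset.sum_ite_eq, Finset.sum_ite_eq', Finset.mem_univ, if_true]


  rw [Finset.sum_comm]
  simp only [Finset.sum_ite_eq, Finset.sum_ite_eq', Finset.mem_univ, if_true,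
    Finset.sum_add_distrib, one_mul]
  have h3 : ∑ x : Fin n, ∑ x_1 : Fin n, (if x = j then A i (x, x_1) * D x_1 k else 0)
      = ∑ x : Fin n, A i (j, x) * D x k := by
    rw [Finset.sum_comm]
    simp [Finset.sum_ite_eq']
  rw [h3, sub_sub]
  congr 1
  exact Finset.sum_congr rfl fun a _ => mul_comm (A a (j, k)) (D i a)

theorem stmt_13 {F : Type*} [Field F] [IsAlgClosed F] (n : ℕ)
    (S : Set (Matrix (Fin n) (Fin n × Fin n) F))
    (hS : S = {A | ∀ D : Matrix (Fin n) (Fin n) F,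
      D * A = A * (D ⊗ₖ (1 : Matrix (Fin n) (Fin n) F)
        + (1 : Matrix (Fin n) (Fin n) F) ⊗ₖ D) → D = 0}) :
    S.Nonempty ∧
    (∃ P : Finset (MvPolynomial (Fin n × (Fin n × Fin n)) F),
      S = {A | ∃ p ∈ P, MvPolynomial.eval (fun q => A q.1 q.2) p ≠ 0}) ∧
    (∀ q : MvPolynomial (Fin n × (Fin n × Fin n)) F,
      (∀ A ∈ S, MvPolynomial.eval (fun i => A i.1 i.2) q = 0) → q = 0) := by
  classical
  -- the matrix of the derivation equation, over F
  set Mmat : Matrix (Fin n) (Fin n × Fin n) F →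
      Matrix (Fin n × (Fin n × Fin n)) (Fin n × Fin n) F :=
    fun A => (fun (rr : Fin n × (Fin n × Fin n)) (c : Fin n × Fin n) =>
      (if rr.1 = c.1 then A c.2 rr.2 else 0) - (if c.2 = rr.2.1 then A rr.1 (c.1, rr.2.2) else 0)
        - (if c.2 = rr.2.2 then A rr.1 (rr.2.1, c.1) else 0)) with hMmat
  -- the matrix of the derivation equation, with polynomial entries
  set Mp : Matrix (Fin n × (Fin n × Fin n)) (Fin n × Fin n)
      (MvPolynomial (Fin n × (Fin n × Fin n)) F) :=
    fun rr c => (if rr.1 = c.1 then MvPolynomial.X (c.2, rr.2) else 0)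
      - (if c.2 = rr.2.1 then MvPolynomial.X (rr.1, (c.1, rr.2.2)) else 0)
      - (if c.2 = rr.2.2 then MvPolynomial.X (rr.1, (rr.2.1, c.1)) else 0) with hMp
  have hmap : ∀ A : Matrix (Fin n) (Fin n × Fin n) F,
      Mp.map (MvPolynomial.eval (fun q => A q.1 q.2)) = Mmat A := by
    intro A
    funext rr c
    rw [Matrix.map_apply]
    simp [hMp, hMmat, Matrix.map_apply, apply_ite (MvPolynomial.eval (fun q : Fin n × (Fin n × Fin n) => A q.1 q.2))]
  have hmem : ∀ A : Matrix (Fin n) (Fin n × Fin n) F,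
      A ∈ S ↔ ∀ v : (Fin n × Fin n) → F, (Mmat A) *ᵥ v = 0 → v = 0 := by
    intro A
    rw [hS]
    constructor
    · intro hA v hv
      set D : Matrix (Fin n) (Fin n) F := Matrix.of fun a b => v (a, b) with hDdef
      have hveq : (fun c : Fin n × Fin n => D c.1 c.2) = v := funext fun c => rfl
      have hD : D = 0 := by
        apply hA
        have hsub : ∀ r : Fin n × (Fin n × Fin n),
            (D * A) r.1 r.2 - (A * (D ⊗ₖ (1 : Matrix (Fin n) (Fin n) F)
              + (1 : Matrix (Fin n) (Fin n) F) ⊗ₖ D)) r.1 r.2 = 0 := by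
          intro r
          rw [← aux_comp, hveq]
          rw [hMmat] at hv
          rw [congrFun hv r]
          rfl
        funext i c
        have := hsub (i, c)
        simpa [sub_eq_zero] using this
      funext c
      have : D c.1 c.2 = 0 := by rw [hD]; rfl
      simpa [hDdef] using this
    · intro h D hD
      have hv : (fun c : Fin n × Fin n => D c.1 c.2) = 0 := by
        apply h
        funext r
        rw [hMmat, aux_comp A D r, hD]
        simp
      funext a b
      exact congrFun hv (a, b)
  have hiff : ∀ A : Matrix (Fin n) (Fin n × Fin n) F,
      A ∈ S ↔ ∃ r : (Fin n × Fin n) → (Fin n × (Fin n × Fin n)),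
        ((Mmat A).submatrix r id).det ≠ 0 := by
    intro A
    rw [hmem A]
    constructor
    · intro h; exact aux_det_rows (Mmat A) h
    · rintro ⟨r, hr⟩; exact aux_det_rows' (Mmat A) r hr
  -- the witness
  set A₀ : Matrix (Fin n) (Fin n × Fin n) F :=
    fun i jk => if i = jk.1 ∧ jk.1 = jk.2 then (1 : F) else 0 with hA₀def
  have hA0 : A₀ ∈ S := by
    rw [hA₀def]
    rw [hS]
    intro D hD
    ext a b
    have h1 := congrArg (fun M : Matrix (Fin n) (Fin n × Fin n) F => M a (b, b)) hD
    erw [Matrix.mul_apply, Matrix.mul_apply] at h1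
    simp only [Matrix.mul_apply, Fintype.sum_prod_type, Matrix.add_apply,
      Matrix.kroneckerMap_apply, Matrix.one_apply, ite_and, mul_ite, mul_one, mul_zero,
      ite_mul, one_mul, zero_mul, Finset.sum_ite_eq, Finset.sum_ite_eq',
      Finset.mem_univ, if_true, if_pos rfl] at h1
    by_cases hab : a = b
    · subst hab
      simp at h1
      simpa using h1
    · simpa [hab] using h1
  have hkey : ∀ (A : Matrix (Fin n) (Fin n × Fin n) F)
      (r : (Fin n × Fin n) → (Fin n × (Fin n × Fin n))),
        MvPolynomial.eval (fun q => A q.1 q.2) (Mp.submatrix r id).det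
          = ((Mmat A).submatrix r id).det := by
    intro A r
    rw [RingHom.map_det]
    simp only [RingHom.mapMatrix_apply]
    rw [← Matrix.submatrix_map, hmap A]
  refine ⟨⟨A₀, hA0⟩, ?_, ?_⟩
  · -- openness
    refine ⟨Finset.image
      (fun r : (Fin n × Fin n) → (Fin n × (Fin n × Fin n)) => (Mp.submatrix r id).det)
      Finset.univ, ?_⟩
    ext A
    rw [hiff A]
    simp only [Set.mem_setOf_eq, Finset.mem_image, Finset.mem_univ, true_and]
    constructor
    · rintro ⟨r, hr⟩
      exact ⟨(Mp.submatrix r id).det, ⟨r, rfl⟩, by rw [hkey A r]; exact hr⟩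
    · rintro ⟨p, ⟨r, rfl⟩, hp⟩
      exact ⟨r, by rw [← hkey A r]; exact hp⟩
  · -- density
    intro q hq
    obtain ⟨r₀, hr₀⟩ := (hiff A₀).mp hA0
    set p₀ : MvPolynomial (Fin n × (Fin n × Fin n)) F := (Mp.submatrix r₀ id).det with hp₀def
    have heval : MvPolynomial.eval (fun q => A₀ q.1 q.2) p₀ ≠ 0 := by
      rw [hp₀def, hkey A₀ r₀]; exact hr₀
    have hp₀ne : p₀ ≠ 0 := by
      intro h
      rw [h, map_zero] at heval
      exact heval rfl
    have hprod : p₀ * q = 0 := by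
      apply MvPolynomial.funext
      intro x
      rw [_root_.map_mul, map_zero]
      set A : Matrix (Fin n) (Fin n × Fin n) F := Matrix.of fun i jk => x (i, jk) with hAdef
      have hx : (fun q' : Fin n × (Fin n × Fin n) => A q'.1 q'.2) = x := funext fun q' => rfl
      by_cases h0 : MvPolynomial.eval x p₀ = 0
      · rw [h0, zero_mul]
      · have hAS : A ∈ S := by
          rw [hiff A]
          refine ⟨r₀, ?_⟩
          rw [← hkey A r₀, hx]
          exact h0
        have := hq A hAS
        rw [hx] at this
        rw [this, mul_zero]
    rcases mul_eq_zero.mp hprod with h | h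
    · exact absurd h hp₀ne
    · exact h
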